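/- Let K be a submultiplicative model kernel and let μ₀ be a finite nonnegative measure on [0,∞) with ⟨φ, μ₀⟩ < ∞, where φ(ω) = ω + 1. Then any strong local solution (μ_t)_{t<T} of the weak isotropic 4-wave kinetic equation starting from μ₀ is conservative: the total energy ∫₀^∞ ω μ_t(dω) is finite and constant in t on [0,T). -/

import Mathlib

open MeasureTheory Set Classical

noncomputable section

/-- `phi ω = ω + 1`. -/
def phi (ω : ℝ) : ℝ := ω + 1

/-- The collision domain `D = {(ω₁,ω₂,ω₃) ∈ [0,∞)³ : ω₁ + ω₂ ≥ ω₃}`. -/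
def Ddom : Set (ℝ × ℝ × ℝ) :=
  {p | 0 ≤ p.1 ∧ 0 ≤ p.2.1 ∧ 0 ≤ p.2.2 ∧ p.2.2 ≤ p.1 + p.2.1}

/-- A model kernel: nonnegative and continuous on `[0,∞)³`, homogeneous of some
degree `λ ≥ 0`, and symmetric in its first two arguments. -/
structure IsModelKernel (K : ℝ → ℝ → ℝ → ℝ) : Prop where
  nonneg : ∀ ω₁ ω₂ ω₃ : ℝ, 0 ≤ ω₁ → 0 ≤ ω₂ → 0 ≤ ω₃ → 0 ≤ K ω₁ ω₂ ω₃
  cont : ContinuousOn (fun p : ℝ × ℝ × ℝ => K p.1 p.2.1 p.2.2)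
    {p : ℝ × ℝ × ℝ | 0 ≤ p.1 ∧ 0 ≤ p.2.1 ∧ 0 ≤ p.2.2}
  homog : ∃ lam : ℝ, 0 ≤ lam ∧ ∀ ξ ω₁ ω₂ ω₃ : ℝ, 0 < ξ → 0 ≤ ω₁ → 0 ≤ ω₂ → 0 ≤ ω₃ →
    K (ξ * ω₁) (ξ * ω₂) (ξ * ω₃) = ξ ^ lam * K ω₁ ω₂ ω₃
  symm : ∀ ω₁ ω₂ ω₃ : ℝ, K ω₁ ω₂ ω₃ = K ω₂ ω₁ ω₃

/-- `K` is submultiplicative: `K(ω₁,ω₂,ω₃) ≤ φ(ω₁)φ(ω₂)φ(ω₃)` on `[0,∞)³`. -/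
def IsSubmultiplicative (K : ℝ → ℝ → ℝ → ℝ) : Prop :=
  ∀ ω₁ ω₂ ω₃ : ℝ, 0 ≤ ω₁ → 0 ≤ ω₂ → 0 ≤ ω₃ →
    K ω₁ ω₂ ω₃ ≤ phi ω₁ * phi ω₂ * phi ω₃

/-- Integrand of the weak collision operator (with the indicator of `D` built in). -/
def collisionIntegrand (K : ℝ → ℝ → ℝ → ℝ) (f : ℝ → ℝ) (p : ℝ × ℝ × ℝ) : ℝ :=
  if p ∈ Ddom then
    (f (p.1 + p.2.1 - p.2.2) + f p.2.2 - f p.2.1 - f p.1) * K p.1 p.2.1 p.2.2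
  else 0

/-- `⟨f, Q(μ)⟩`. -/
def Qpair (K : ℝ → ℝ → ℝ → ℝ) (μ : Measure ℝ) (f : ℝ → ℝ) : ℝ :=
  (1 / 2) * ∫ p, collisionIntegrand K f p ∂(μ.prod (μ.prod μ))

/-- Test functions: bounded measurable with bounded support. -/
def TestFun (f : ℝ → ℝ) : Prop :=
  Measurable f ∧ (∃ C, ∀ ω, |f ω| ≤ C) ∧ ∃ R, ∀ ω, R < |ω| → f ω = 0

/-- A local solution on `[0,T)` of the weak isotropic 4-wave kinetic equation,
starting from `μ₀`. -/
structure IsLocalSolution (K : ℝ → ℝ → ℝ → ℝ) (μ₀ : Measure ℝ) (T : ℝ)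
    (μ : ℝ → Measure ℝ) : Prop where
  finite : ∀ t, 0 ≤ t → t < T → IsFiniteMeasure (μ t)
  supp : ∀ t, 0 ≤ t → t < T → μ t (Set.Iio 0) = 0
  eqn : ∀ f : ℝ → ℝ, TestFun f → ∀ t, 0 ≤ t → t < T →
    ∫ ω, f ω ∂(μ t) = ∫ ω, f ω ∂μ₀ + ∫ s in Set.Ioc (0 : ℝ) t, Qpair K (μ s) f
  energy : ∀ t, 0 ≤ t → t < T →
    ∫⁻ ω, ENNReal.ofReal ω ∂(μ t) ≤ ∫⁻ ω, ENNReal.ofReal ω ∂μ₀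

/-- A strong local solution: `∫₀ᵗ ⟨φ², μ_s⟩ ds < ∞` for all `t < T`. -/
def IsStrongSolution (K : ℝ → ℝ → ℝ → ℝ) (μ₀ : Measure ℝ) (T : ℝ)
    (μ : ℝ → Measure ℝ) : Prop :=
  IsLocalSolution K μ₀ T μ ∧ ∀ t, 0 ≤ t → t < T →
    ∫⁻ s in Set.Ioc (0 : ℝ) t, ∫⁻ ω, ENNReal.ofReal (phi ω ^ 2) ∂(μ s) < ⊤

namespace WaveAux

lemma phi_nonneg {ω : ℝ} (h : 0 ≤ ω) : 0 ≤ phi ω := by unfold phi; linarith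
lemma one_le_phi {ω : ℝ} (h : 0 ≤ ω) : 1 ≤ phi ω := by unfold phi; linarith
lemma le_phi {ω : ℝ} : ω ≤ phi ω := by unfold phi; linarith

/-- indicator of `(c,∞)`. -/
def cutI (c : ℝ) (ω : ℝ) : ℝ := if c < ω then 1 else 0
/-- `ω·1_{ω>c}`. -/
def cutT (c : ℝ) (ω : ℝ) : ℝ := if c < ω then ω else 0

lemma cutI_nonneg (c ω : ℝ) : 0 ≤ cutI c ω := by unfold cutI; split <;> norm_num
lemma cutI_le_one (c ω : ℝ) : cutI c ω ≤ 1 := by unfold cutI; split <;> norm_num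
lemma cutT_nonneg {c : ℝ} (hc : 0 ≤ c) (ω : ℝ) : 0 ≤ cutT c ω := by
  unfold cutT; split
  · linarith
  · exact le_refl 0

/-- the mass test function. -/
def chiT (n : ℝ) : ℝ → ℝ := (Icc (0:ℝ) n).indicator (fun _ => (1:ℝ))
/-- the energy test function. -/
def fcut (n : ℝ) : ℝ → ℝ := (Icc (0:ℝ) n).indicator (fun ω => ω)
/-- the second-moment test function. -/
def vcut (n : ℝ) : ℝ → ℝ := (Icc (0:ℝ) n).indicator (fun ω => phi ω ^ 2)

lemma chiT_eq {n ω : ℝ} (h : 0 ≤ ω) : chiT n ω = 1 - cutI n ω := by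
  unfold chiT cutI indicator
  by_cases hω : ω ≤ n
  · simp [mem_Icc, h, hω, not_lt.mpr hω]
  · simp [mem_Icc, h, hω, lt_of_not_ge hω]

lemma fcut_eq {n ω : ℝ} (h : 0 ≤ ω) : fcut n ω = ω - cutT n ω := by
  unfold fcut cutT indicator
  by_cases hω : ω ≤ n
  · simp [mem_Icc, h, hω, not_lt.mpr hω]
  · simp [mem_Icc, h, hω, lt_of_not_ge hω]


lemma cutI_mono_th {c c' ω : ℝ} (h : c' ≤ c) : cutI c ω ≤ cutI c' ω := by
  unfold cutI
  by_cases h1 : c < ω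
  · rw [if_pos h1, if_pos (lt_of_le_of_lt h h1)]
  · rw [if_neg h1]; exact cutI_nonneg _ _

lemma cutT_mono_th {c c' ω : ℝ} (h : c' ≤ c) (hω : 0 ≤ ω) : cutT c ω ≤ cutT c' ω := by
  unfold cutT
  by_cases h1 : c < ω
  · rw [if_pos h1, if_pos (lt_of_le_of_lt h h1)]
  · rw [if_neg h1]; split
    · exact hω
    · exact le_refl 0

/-- bracket bound for the mass test function. -/
lemma mass_bracket {n x y z : ℝ} (hn : 0 < n) (hx : 0 ≤ x) (hy : 0 ≤ y) (hz : 0 ≤ z)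
    (hzxy : z ≤ x + y) :
    |chiT n (x + y - z) + chiT n z - chiT n y - chiT n x| ≤
      2 * cutI (n/2) x + 2 * cutI (n/2) y + cutI (n/2) z := by
  have hw : 0 ≤ x + y - z := by linarith
  rw [chiT_eq hw, chiT_eq hz, chiT_eq hy, chiT_eq hx]
  have e1 : cutI n x ≤ cutI (n/2) x := cutI_mono_th (by linarith)
  have e2 : cutI n y ≤ cutI (n/2) y := cutI_mono_th (by linarith)
  have e3 : cutI n z ≤ cutI (n/2) z := cutI_mono_th (by linarith)
  have e4 : cutI n (x + y - z) ≤ cutI (n/2) x + cutI (n/2) y := by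
    unfold cutI
    by_cases h1 : n < x + y - z
    · rw [if_pos h1]
      rcases le_or_gt x y with hxy | hxy
      · have : n/2 < y := by linarith
        rw [if_pos this]
        have := cutI_nonneg (n/2) x
        unfold cutI at this; linarith
      · have : n/2 < x := by linarith
        rw [if_pos this]
        have := cutI_nonneg (n/2) y
        unfold cutI at this; linarith
    · rw [if_neg h1]
      have := cutI_nonneg (n/2) x; have := cutI_nonneg (n/2) y
      unfold cutI at *; positivity
  have n1 := cutI_nonneg n x; have n2 := cutI_nonneg n y
  have n3 := cutI_nonneg n z; have n4 := cutI_nonneg n (x+y-z)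
  have m1 := cutI_le_one n x; have m2 := cutI_le_one n y
  rw [abs_le]
  constructor <;> [skip; skip] <;> nlinarith [cutI_nonneg (n/2) x, cutI_nonneg (n/2) y,
    cutI_nonneg (n/2) z]

/-- bracket bound for the energy test function. -/
lemma energy_bracket {n r x y z : ℝ} (hr : 0 < r) (h2r : 2 * r ≤ n)
    (hx : 0 ≤ x) (hy : 0 ≤ y) (hz : 0 ≤ z) (hzxy : z ≤ x + y) :
    |fcut n (x + y - z) + fcut n z - fcut n y - fcut n x| ≤
      3 * cutT r x + 3 * cutT r y + 3 * cutT r z := by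
  have hw : 0 ≤ x + y - z := by linarith
  rw [fcut_eq hw, fcut_eq hz, fcut_eq hy, fcut_eq hx]
  have hn : 0 < n := by linarith
  have e1 : cutT n x ≤ cutT r x := cutT_mono_th (by linarith) hx
  have e2 : cutT n y ≤ cutT r y := cutT_mono_th (by linarith) hy
  have e3 : cutT n z ≤ cutT r z := cutT_mono_th (by linarith) hz
  have e4 : cutT n (x + y - z) ≤ 2 * cutT r x + 2 * cutT r y := by
    unfold cutT
    by_cases h1 : n < x + y - z
    · rw [if_pos h1]
      rcases le_or_gt x y with hxy | hxy
      · have h2 : r < y := by linarith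
        rw [if_pos h2]
        split
        · linarith
        · linarith
      · have h2 : r < x := by linarith
        rw [if_pos h2]
        split
        · linarith
        · linarith
    · rw [if_neg h1]
      have := cutT_nonneg hr.le x; have := cutT_nonneg hr.le y
      unfold cutT at *; positivity
  have n1 := cutT_nonneg (le_of_lt (by linarith : (0:ℝ) < n)) x
  have n2 := cutT_nonneg (le_of_lt (by linarith : (0:ℝ) < n)) y
  have n3 := cutT_nonneg (le_of_lt (by linarith : (0:ℝ) < n)) z
  have n4 := cutT_nonneg (le_of_lt (by linarith : (0:ℝ) < n)) (x+y-z)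
  have p1 := cutT_nonneg hr.le x; have p2 := cutT_nonneg hr.le y
  have p3 := cutT_nonneg hr.le z
  have hkey : x + y - z + z - y - x = 0 := by ring
  rw [abs_le]
  constructor <;> nlinarith


open ENNReal

lemma ae_nonneg (ν : Measure ℝ) (hsupp : ν (Iio 0) = 0) : ∀ᵐ ω ∂ν, 0 ≤ ω := by
  rw [ae_iff]
  convert hsupp using 2
  ext ω; simp [not_le]

lemma ae_octant (ν : Measure ℝ) [SFinite ν] (hsupp : ν (Iio 0) = 0) :
    ∀ᵐ p : ℝ × ℝ × ℝ ∂(ν.prod (ν.prod ν)), 0 ≤ p.1 ∧ 0 ≤ p.2.1 ∧ 0 ≤ p.2.2 := by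
  rw [ae_iff]
  apply measure_mono_null (t := (Iio 0 ×ˢ (univ : Set (ℝ × ℝ))) ∪
    ((univ : Set ℝ) ×ˢ (Iio 0 ×ˢ (univ : Set ℝ))) ∪ ((univ : Set ℝ) ×ˢ ((univ : Set ℝ) ×ˢ Iio 0)))
  · intro p hp
    simp only [mem_setOf_eq, not_and, not_le] at hp
    by_cases h1 : 0 ≤ p.1
    · by_cases h2 : 0 ≤ p.2.1
      · exact Or.inr (by simp [mem_prod, not_le.mp (fun h => absurd (hp h1 h2) (not_lt.mpr h))])
      · exact Or.inl (Or.inr (by simp [mem_prod, not_le.mp h2]))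
    · exact Or.inl (Or.inl (by simp [mem_prod, not_le.mp h1]))
  · have h2 : (ν.prod ν) (univ : Set (ℝ×ℝ)) ≠ 0 ∨ True := Or.inr trivial
    apply le_antisymm _ (zero_le)
    apply le_trans (measure_union_le _ _)
    have e1 : (ν.prod (ν.prod ν)) (Iio 0 ×ˢ (univ : Set (ℝ × ℝ))) = 0 := by
      rw [Measure.prod_prod, hsupp, zero_mul]
    have e2 : (ν.prod (ν.prod ν)) ((univ : Set ℝ) ×ˢ (Iio 0 ×ˢ (univ : Set ℝ))) = 0 := by
      rw [Measure.prod_prod, Measure.prod_prod, hsupp, zero_mul, mul_zero]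
    have e3 : (ν.prod (ν.prod ν)) ((univ : Set ℝ) ×ˢ ((univ : Set ℝ) ×ˢ Iio 0)) = 0 := by
      rw [Measure.prod_prod, Measure.prod_prod, hsupp, mul_zero, mul_zero]
    rw [e3]
    rw [add_zero]; apply le_trans (measure_union_le _ _)
    rw [e1, e2]; simp

lemma lintegral_triple (ν : Measure ℝ) [SFinite ν] {a b c : ℝ → ℝ≥0∞}
    (ha : Measurable a) (hb : Measurable b) (hc : Measurable c) :
    ∫⁻ p : ℝ × ℝ × ℝ, a p.1 * b p.2.1 * c p.2.2 ∂(ν.prod (ν.prod ν)) =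
      (∫⁻ ω, a ω ∂ν) * ((∫⁻ ω, b ω ∂ν) * (∫⁻ ω, c ω ∂ν)) := by
  have hbc : AEMeasurable (fun q : ℝ × ℝ => b q.1 * c q.2) (ν.prod ν) :=
    ((hb.comp measurable_fst).mul (hc.comp measurable_snd)).aemeasurable
  have h1 : ∫⁻ p : ℝ × ℝ × ℝ, a p.1 * (b p.2.1 * c p.2.2) ∂(ν.prod (ν.prod ν)) =
      (∫⁻ ω, a ω ∂ν) * ∫⁻ q : ℝ × ℝ, b q.1 * c q.2 ∂(ν.prod ν) :=
    lintegral_prod_mul ha.aemeasurable hbc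
  rw [lintegral_prod_mul hb.aemeasurable hc.aemeasurable] at h1
  rw [← h1]
  congr 1
  funext p
  rw [mul_assoc]

lemma lintegral_triple' (ν : Measure ℝ) [SFinite ν] {a b c : ℝ → ℝ≥0∞}
    (ha : Measurable a) (hb : Measurable b) (hc : Measurable c) :
    ∫⁻ p : ℝ × ℝ × ℝ, a p.1 * (b p.2.1 * c p.2.2) ∂(ν.prod (ν.prod ν)) =
      (∫⁻ ω, a ω ∂ν) * ((∫⁻ ω, b ω ∂ν) * (∫⁻ ω, c ω ∂ν)) := by
  rw [← lintegral_triple ν ha hb hc]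
  congr 1
  funext p
  rw [mul_assoc]

/-- Core bound: `ofReal |Qpair| ≤ ∫⁻ G` whenever `G` dominates the integrand on the octant. -/
lemma qpair_abs_le (K : ℝ → ℝ → ℝ → ℝ) (f : ℝ → ℝ) (ν : Measure ℝ) [SFinite ν]
    (hsupp : ν (Iio 0) = 0) {G : ℝ × ℝ × ℝ → ℝ≥0∞}
    (hG : ∀ p : ℝ × ℝ × ℝ, 0 ≤ p.1 → 0 ≤ p.2.1 → 0 ≤ p.2.2 →
      ENNReal.ofReal |collisionIntegrand K f p| ≤ G p) :
    ENNReal.ofReal |Qpair K ν f| ≤ ∫⁻ p, G p ∂(ν.prod (ν.prod ν)) := by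
  have h1 : |Qpair K ν f| ≤ ‖∫ p, collisionIntegrand K f p ∂(ν.prod (ν.prod ν))‖ := by
    rw [Qpair, abs_mul]
    rw [Real.norm_eq_abs]
    rw [abs_of_nonneg (by norm_num : (0:ℝ) ≤ 1/2)]
    nlinarith [abs_nonneg (∫ p, collisionIntegrand K f p ∂(ν.prod (ν.prod ν)))]
  apply le_trans (ENNReal.ofReal_le_ofReal h1)
  apply le_trans (ENNReal.ofReal_le_ofReal (norm_integral_le_lintegral_norm _))
  apply le_trans (ENNReal.ofReal_toReal_le)
  apply lintegral_mono_ae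
  filter_upwards [ae_octant ν hsupp] with p hp
  rw [Real.norm_eq_abs]
  exact hG p hp.1 hp.2.1 hp.2.2


lemma cutI_measurable (c : ℝ) : Measurable (cutI c) :=
  Measurable.ite measurableSet_Ioi measurable_const measurable_const

lemma cutT_measurable (c : ℝ) : Measurable (cutT c) :=
  Measurable.ite measurableSet_Ioi measurable_id measurable_const

lemma phi_measurable : Measurable phi := by
  unfold phi; exact measurable_id.add_const 1

/-- `∫⁻ φ dν`. -/
def Bq (ν : Measure ℝ) : ℝ≥0∞ := ∫⁻ ω, ENNReal.ofReal (phi ω) ∂ν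
/-- `∫⁻ φ² dν`. -/
def Aq (ν : Measure ℝ) : ℝ≥0∞ := ∫⁻ ω, ENNReal.ofReal (phi ω ^ 2) ∂ν
/-- `∫⁻_{(r,∞)} φ² dν`. -/
def Wq (r : ℝ) (ν : Measure ℝ) : ℝ≥0∞ := ∫⁻ ω in Ioi r, ENNReal.ofReal (phi ω ^ 2) ∂ν

lemma lint_cutIphi (ν : Measure ℝ) {n : ℝ} (hn : 1 ≤ n) (k : ℝ) (hk : 0 ≤ k) :
    ∫⁻ ω, ENNReal.ofReal (k * cutI (n/2) ω * phi ω) ∂ν ≤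
      ENNReal.ofReal (2 * k / n) * Aq ν := by
  have hpt : ∀ ω : ℝ, ENNReal.ofReal (k * cutI (n/2) ω * phi ω) ≤
      ENNReal.ofReal (2 * k / n * phi ω ^ 2) := by
    intro ω
    apply ENNReal.ofReal_le_ofReal
    unfold cutI
    by_cases h1 : n/2 < ω
    · rw [if_pos h1]
      have hφ : n/2 < phi ω := by unfold phi; linarith
      have h0φ : 0 < phi ω := by linarith
      rw [mul_one]
      rw [div_mul_eq_mul_div, le_div_iff₀ (by linarith : (0:ℝ) < n)]
      have key : 0 ≤ (2 * phi ω - n) * (k * phi ω) :=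
        mul_nonneg (by linarith) (mul_nonneg hk h0φ.le)
      nlinarith [key]
    · rw [if_neg h1, mul_zero, zero_mul]
      positivity
  calc ∫⁻ ω, ENNReal.ofReal (k * cutI (n/2) ω * phi ω) ∂ν
      ≤ ∫⁻ ω, ENNReal.ofReal (2 * k / n * phi ω ^ 2) ∂ν := lintegral_mono hpt
    _ = ∫⁻ ω, ENNReal.ofReal (2 * k / n) * ENNReal.ofReal (phi ω ^ 2) ∂ν := by
        congr 1; funext ω; rw [ENNReal.ofReal_mul (by positivity)]
    _ = ENNReal.ofReal (2 * k / n) * Aq ν := lintegral_const_mul' _ _ ENNReal.ofReal_ne_top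

lemma lint_cutTphi (ν : Measure ℝ) {r : ℝ} (hr : 0 < r) :
    ∫⁻ ω, ENNReal.ofReal (3 * cutT r ω * phi ω) ∂ν ≤ 3 * Wq r ν := by
  have hpt : ∀ ω : ℝ, ENNReal.ofReal (3 * cutT r ω * phi ω) ≤
      3 * (Ioi r).indicator (fun ω => ENNReal.ofReal (phi ω ^ 2)) ω := by
    intro ω
    unfold cutT
    by_cases h1 : r < ω
    · rw [if_pos h1, indicator_of_mem (show ω ∈ Ioi r from h1)]
      have hω : 0 ≤ ω := le_trans hr.le h1.le
      have : (3 : ℝ≥0∞) = ENNReal.ofReal 3 := by norm_num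
      rw [this, ← ENNReal.ofReal_mul (by norm_num)]
      apply ENNReal.ofReal_le_ofReal
      have := phi_nonneg hω
      nlinarith [le_phi (ω := ω)]
    · rw [if_neg h1, indicator_of_notMem (show ω ∉ Ioi r from h1), mul_zero, zero_mul,
        ENNReal.ofReal_zero]
      exact zero_le
  calc ∫⁻ ω, ENNReal.ofReal (3 * cutT r ω * phi ω) ∂ν
      ≤ ∫⁻ ω, 3 * (Ioi r).indicator (fun ω => ENNReal.ofReal (phi ω ^ 2)) ω ∂ν :=
        lintegral_mono hpt
    _ = 3 * ∫⁻ ω, (Ioi r).indicator (fun ω => ENNReal.ofReal (phi ω ^ 2)) ω ∂ν :=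
        lintegral_const_mul' _ _ (by norm_num)
    _ = 3 * Wq r ν := by unfold Wq; rw [lintegral_indicator measurableSet_Ioi]


section QBounds
variable {K : ℝ → ℝ → ℝ → ℝ}

/-- Pointwise domination of the mass-collision integrand. -/
lemma mass_integrand_bound (hKnn : ∀ x y z : ℝ, 0 ≤ x → 0 ≤ y → 0 ≤ z → 0 ≤ K x y z)
    (hKsub : IsSubmultiplicative K) {n : ℝ} (hn : 0 < n) (p : ℝ × ℝ × ℝ)
    (hx : 0 ≤ p.1) (hy : 0 ≤ p.2.1) (hz : 0 ≤ p.2.2) :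
    ENNReal.ofReal |collisionIntegrand K (chiT n) p| ≤
      ENNReal.ofReal (2 * cutI (n/2) p.1 * phi p.1) *
        (ENNReal.ofReal (phi p.2.1) * ENNReal.ofReal (phi p.2.2)) +
      (ENNReal.ofReal (phi p.1) *
        (ENNReal.ofReal (2 * cutI (n/2) p.2.1 * phi p.2.1) * ENNReal.ofReal (phi p.2.2)) +
       ENNReal.ofReal (phi p.1) *
        (ENNReal.ofReal (phi p.2.1) * ENNReal.ofReal (cutI (n/2) p.2.2 * phi p.2.2))) := by
  obtain ⟨x, y, z⟩ := p
  simp only at hx hy hz ⊢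
  have hpx := phi_nonneg hx; have hpy := phi_nonneg hy; have hpz := phi_nonneg hz
  have c1 := cutI_nonneg (n/2) x; have c2 := cutI_nonneg (n/2) y; have c3 := cutI_nonneg (n/2) z
  have q1 : 0 ≤ 2 * cutI (n/2) x * phi x := mul_nonneg (by linarith) hpx
  have q2 : 0 ≤ 2 * cutI (n/2) y * phi y := mul_nonneg (by linarith) hpy
  have q3 : 0 ≤ cutI (n/2) z * phi z := mul_nonneg c3 hpz
  have hreal : |collisionIntegrand K (chiT n) (x, y, z)| ≤
      (2 * cutI (n/2) x * phi x) * (phi y * phi z) +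
      (phi x * ((2 * cutI (n/2) y * phi y) * phi z) +
       phi x * (phi y * (cutI (n/2) z * phi z))) := by
    unfold collisionIntegrand
    split
    · rename_i hD
      obtain ⟨-, -, -, hzxy⟩ := hD
      simp only at hzxy
      have hK0 : 0 ≤ K x y z := hKnn x y z hx hy hz
      have hKle : K x y z ≤ phi x * phi y * phi z := hKsub x y z hx hy hz
      have hb := mass_bracket hn hx hy hz hzxy
      calc |(chiT n (x + y - z) + chiT n z - chiT n y - chiT n x) * K x y z|
          = |chiT n (x + y - z) + chiT n z - chiT n y - chiT n x| * K x y z := by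
            rw [abs_mul, abs_of_nonneg hK0]
        _ ≤ (2 * cutI (n/2) x + 2 * cutI (n/2) y + cutI (n/2) z) * (phi x * phi y * phi z) := by
            exact mul_le_mul hb hKle hK0 (by linarith)
        _ = (2 * cutI (n/2) x * phi x) * (phi y * phi z) +
            (phi x * ((2 * cutI (n/2) y * phi y) * phi z) +
             phi x * (phi y * (cutI (n/2) z * phi z))) := by ring
    · rw [abs_zero]
      exact add_nonneg (mul_nonneg q1 (mul_nonneg hpy hpz))
        (add_nonneg (mul_nonneg hpx (mul_nonneg q2 hpz)) (mul_nonneg hpx (mul_nonneg hpy q3)))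
  apply le_trans (ENNReal.ofReal_le_ofReal hreal)
  rw [ENNReal.ofReal_add (mul_nonneg q1 (mul_nonneg hpy hpz))
        (add_nonneg (mul_nonneg hpx (mul_nonneg q2 hpz)) (mul_nonneg hpx (mul_nonneg hpy q3))),
      ENNReal.ofReal_add (mul_nonneg hpx (mul_nonneg q2 hpz)) (mul_nonneg hpx (mul_nonneg hpy q3))]
  rw [ENNReal.ofReal_mul q1, ENNReal.ofReal_mul hpy,
      ENNReal.ofReal_mul hpx, ENNReal.ofReal_mul q2,
      ENNReal.ofReal_mul hpx, ENNReal.ofReal_mul hpy]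

/-- Pointwise domination of the energy-collision integrand. -/
lemma energy_integrand_bound (hKnn : ∀ x y z : ℝ, 0 ≤ x → 0 ≤ y → 0 ≤ z → 0 ≤ K x y z)
    (hKsub : IsSubmultiplicative K) {n r : ℝ} (hr : 0 < r) (h2r : 2 * r ≤ n) (p : ℝ × ℝ × ℝ)
    (hx : 0 ≤ p.1) (hy : 0 ≤ p.2.1) (hz : 0 ≤ p.2.2) :
    ENNReal.ofReal |collisionIntegrand K (fcut n) p| ≤
      ENNReal.ofReal (3 * cutT r p.1 * phi p.1) *
        (ENNReal.ofReal (phi p.2.1) * ENNReal.ofReal (phi p.2.2)) +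
      (ENNReal.ofReal (phi p.1) *
        (ENNReal.ofReal (3 * cutT r p.2.1 * phi p.2.1) * ENNReal.ofReal (phi p.2.2)) +
       ENNReal.ofReal (phi p.1) *
        (ENNReal.ofReal (phi p.2.1) * ENNReal.ofReal (3 * cutT r p.2.2 * phi p.2.2))) := by
  obtain ⟨x, y, z⟩ := p
  simp only at hx hy hz ⊢
  have hpx := phi_nonneg hx; have hpy := phi_nonneg hy; have hpz := phi_nonneg hz
  have c1 := cutT_nonneg hr.le x; have c2 := cutT_nonneg hr.le y; have c3 := cutT_nonneg hr.le z
  have q1 : 0 ≤ 3 * cutT r x * phi x := mul_nonneg (by linarith) hpx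
  have q2 : 0 ≤ 3 * cutT r y * phi y := mul_nonneg (by linarith) hpy
  have q3 : 0 ≤ 3 * cutT r z * phi z := mul_nonneg (by linarith) hpz
  have hreal : |collisionIntegrand K (fcut n) (x, y, z)| ≤
      (3 * cutT r x * phi x) * (phi y * phi z) +
      (phi x * ((3 * cutT r y * phi y) * phi z) +
       phi x * (phi y * (3 * cutT r z * phi z))) := by
    unfold collisionIntegrand
    split
    · rename_i hD
      obtain ⟨-, -, -, hzxy⟩ := hD
      simp only at hzxy
      have hK0 : 0 ≤ K x y z := hKnn x y z hx hy hz
      have hKle : K x y z ≤ phi x * phi y * phi z := hKsub x y z hx hy hz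
      have hb := energy_bracket hr h2r hx hy hz hzxy
      calc |(fcut n (x + y - z) + fcut n z - fcut n y - fcut n x) * K x y z|
          = |fcut n (x + y - z) + fcut n z - fcut n y - fcut n x| * K x y z := by
            rw [abs_mul, abs_of_nonneg hK0]
        _ ≤ (3 * cutT r x + 3 * cutT r y + 3 * cutT r z) * (phi x * phi y * phi z) := by
            exact mul_le_mul hb hKle hK0 (by linarith)
        _ = (3 * cutT r x * phi x) * (phi y * phi z) +
            (phi x * ((3 * cutT r y * phi y) * phi z) +
             phi x * (phi y * (3 * cutT r z * phi z))) := by ring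
    · rw [abs_zero]
      exact add_nonneg (mul_nonneg q1 (mul_nonneg hpy hpz))
        (add_nonneg (mul_nonneg hpx (mul_nonneg q2 hpz)) (mul_nonneg hpx (mul_nonneg hpy q3)))
  apply le_trans (ENNReal.ofReal_le_ofReal hreal)
  rw [ENNReal.ofReal_add (mul_nonneg q1 (mul_nonneg hpy hpz))
        (add_nonneg (mul_nonneg hpx (mul_nonneg q2 hpz)) (mul_nonneg hpx (mul_nonneg hpy q3))),
      ENNReal.ofReal_add (mul_nonneg hpx (mul_nonneg q2 hpz)) (mul_nonneg hpx (mul_nonneg hpy q3))]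
  rw [ENNReal.ofReal_mul q1, ENNReal.ofReal_mul hpy,
      ENNReal.ofReal_mul hpx, ENNReal.ofReal_mul q2,
      ENNReal.ofReal_mul hpx, ENNReal.ofReal_mul hpy]

end QBounds


section QM
variable {K : ℝ → ℝ → ℝ → ℝ}

lemma qmass (hKnn : ∀ x y z : ℝ, 0 ≤ x → 0 ≤ y → 0 ≤ z → 0 ≤ K x y z)
    (hKsub : IsSubmultiplicative K) (ν : Measure ℝ) [IsFiniteMeasure ν]
    (hsupp : ν (Iio 0) = 0) {n : ℝ} (hn : 1 ≤ n) :
    ENNReal.ofReal |Qpair K ν (chiT n)| ≤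
      ENNReal.ofReal (10/n) * (Aq ν * (Bq ν * Bq ν)) := by
  have hn0 : 0 < n := lt_of_lt_of_le one_pos hn
  set g1 : ℝ → ℝ≥0∞ := fun ω => ENNReal.ofReal (2 * cutI (n/2) ω * phi ω) with hg1
  set g2 : ℝ → ℝ≥0∞ := fun ω => ENNReal.ofReal (cutI (n/2) ω * phi ω) with hg2
  set ph : ℝ → ℝ≥0∞ := fun ω => ENNReal.ofReal (phi ω) with hph
  have hmg1 : Measurable g1 :=
    ENNReal.measurable_ofReal.comp ((measurable_const.mul (cutI_measurable _)).mul phi_measurable)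
  have hmg2 : Measurable g2 :=
    ENNReal.measurable_ofReal.comp ((cutI_measurable _).mul phi_measurable)
  have hmph : Measurable ph := ENNReal.measurable_ofReal.comp phi_measurable
  have hstep := qpair_abs_le K (chiT n) ν hsupp
    (G := fun p => g1 p.1 * (ph p.2.1 * ph p.2.2) +
      (ph p.1 * (g1 p.2.1 * ph p.2.2) + ph p.1 * (ph p.2.1 * g2 p.2.2)))
    (fun p hx hy hz => mass_integrand_bound hKnn hKsub hn0 p hx hy hz)
  apply le_trans hstep
  have hm1 : Measurable (fun p : ℝ × ℝ × ℝ => g1 p.1 * (ph p.2.1 * ph p.2.2)) :=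
    (hmg1.comp measurable_fst).mul ((hmph.comp (measurable_fst.comp measurable_snd)).mul
      (hmph.comp (measurable_snd.comp measurable_snd)))
  have hm2 : Measurable (fun p : ℝ × ℝ × ℝ => ph p.1 * (g1 p.2.1 * ph p.2.2)) :=
    (hmph.comp measurable_fst).mul ((hmg1.comp (measurable_fst.comp measurable_snd)).mul
      (hmph.comp (measurable_snd.comp measurable_snd)))
  rw [lintegral_add_left hm1, lintegral_add_left hm2]
  rw [lintegral_triple' ν hmg1 hmph hmph, lintegral_triple' ν hmph hmg1 hmph,
      lintegral_triple' ν hmph hmph hmg2]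
  have hL1 : ∫⁻ ω, g1 ω ∂ν ≤ ENNReal.ofReal (2*2/n) * Aq ν := lint_cutIphi ν hn 2 (by norm_num)
  have hL2 : ∫⁻ ω, g2 ω ∂ν ≤ ENNReal.ofReal (2*1/n) * Aq ν := by
    have : g2 = fun ω => ENNReal.ofReal (1 * cutI (n/2) ω * phi ω) := by
      funext ω; rw [hg2]; norm_num
    rw [this]
    exact lint_cutIphi ν hn 1 (by norm_num)
  have hBq : (∫⁻ ω, ph ω ∂ν) = Bq ν := rfl
  rw [hBq]
  calc (∫⁻ ω, g1 ω ∂ν) * (Bq ν * Bq ν) +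
        (Bq ν * ((∫⁻ ω, g1 ω ∂ν) * Bq ν) + Bq ν * (Bq ν * (∫⁻ ω, g2 ω ∂ν)))
      ≤ (ENNReal.ofReal (2*2/n) * Aq ν) * (Bq ν * Bq ν) +
        (Bq ν * ((ENNReal.ofReal (2*2/n) * Aq ν) * Bq ν) +
         Bq ν * (Bq ν * (ENNReal.ofReal (2*1/n) * Aq ν))) := by gcongr
    _ = (ENNReal.ofReal (2*2/n) + (ENNReal.ofReal (2*2/n) + ENNReal.ofReal (2*1/n))) *
          (Aq ν * (Bq ν * Bq ν)) := by ring
    _ = ENNReal.ofReal (10/n) * (Aq ν * (Bq ν * Bq ν)) := by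
        rw [← ENNReal.ofReal_add (by positivity) (by positivity),
            ← ENNReal.ofReal_add (by positivity) (by positivity)]
        congr 1
        ring

lemma qenergy (hKnn : ∀ x y z : ℝ, 0 ≤ x → 0 ≤ y → 0 ≤ z → 0 ≤ K x y z)
    (hKsub : IsSubmultiplicative K) (ν : Measure ℝ) [IsFiniteMeasure ν]
    (hsupp : ν (Iio 0) = 0) {n r : ℝ} (hr : 0 < r) (h2r : 2 * r ≤ n) :
    ENNReal.ofReal |Qpair K ν (fcut n)| ≤ 9 * (Wq r ν * (Bq ν * Bq ν)) := by
  set g : ℝ → ℝ≥0∞ := fun ω => ENNReal.ofReal (3 * cutT r ω * phi ω) with hg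
  set ph : ℝ → ℝ≥0∞ := fun ω => ENNReal.ofReal (phi ω) with hph
  have hmg : Measurable g :=
    ENNReal.measurable_ofReal.comp ((measurable_const.mul (cutT_measurable _)).mul phi_measurable)
  have hmph : Measurable ph := ENNReal.measurable_ofReal.comp phi_measurable
  have hstep := qpair_abs_le K (fcut n) ν hsupp
    (G := fun p => g p.1 * (ph p.2.1 * ph p.2.2) +
      (ph p.1 * (g p.2.1 * ph p.2.2) + ph p.1 * (ph p.2.1 * g p.2.2)))
    (fun p hx hy hz => energy_integrand_bound hKnn hKsub hr h2r p hx hy hz)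
  apply le_trans hstep
  have hm1 : Measurable (fun p : ℝ × ℝ × ℝ => g p.1 * (ph p.2.1 * ph p.2.2)) :=
    (hmg.comp measurable_fst).mul ((hmph.comp (measurable_fst.comp measurable_snd)).mul
      (hmph.comp (measurable_snd.comp measurable_snd)))
  have hm2 : Measurable (fun p : ℝ × ℝ × ℝ => ph p.1 * (g p.2.1 * ph p.2.2)) :=
    (hmph.comp measurable_fst).mul ((hmg.comp (measurable_fst.comp measurable_snd)).mul
      (hmph.comp (measurable_snd.comp measurable_snd)))
  rw [lintegral_add_left hm1, lintegral_add_left hm2]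
  rw [lintegral_triple' ν hmg hmph hmph, lintegral_triple' ν hmph hmg hmph,
      lintegral_triple' ν hmph hmph hmg]
  have hL : ∫⁻ ω, g ω ∂ν ≤ 3 * Wq r ν := lint_cutTphi ν hr
  have hBq : (∫⁻ ω, ph ω ∂ν) = Bq ν := rfl
  rw [hBq]
  calc (∫⁻ ω, g ω ∂ν) * (Bq ν * Bq ν) +
        (Bq ν * ((∫⁻ ω, g ω ∂ν) * Bq ν) + Bq ν * (Bq ν * (∫⁻ ω, g ω ∂ν)))
      ≤ (3 * Wq r ν) * (Bq ν * Bq ν) +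
        (Bq ν * ((3 * Wq r ν) * Bq ν) + Bq ν * (Bq ν * (3 * Wq r ν))) := by gcongr
    _ = 9 * (Wq r ν * (Bq ν * Bq ν)) := by ring

end QM


/-- the `B` quantity is controlled by truncated mass and energy. -/
lemma Bq_bound (ν : Measure ℝ) [IsFiniteMeasure ν] (hsupp : ν (Iio 0) = 0)
    {n : ℝ} (hn : 1 ≤ n) {E M : ℝ≥0∞}
    (hE : ∫⁻ ω, ENNReal.ofReal ω ∂ν ≤ E) (hM : ν (Icc 0 n) ≤ M) :
    Bq ν ≤ M + E + E := by
  have h1 : Bq ν = (∫⁻ ω, ENNReal.ofReal ω ∂ν) + ν univ := by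
    unfold Bq
    have he : ∫⁻ ω, ENNReal.ofReal (phi ω) ∂ν = ∫⁻ ω, (ENNReal.ofReal ω + 1) ∂ν := by
      apply lintegral_congr_ae
      filter_upwards [ae_nonneg ν hsupp] with ω hω
      unfold phi
      rw [ENNReal.ofReal_add hω (by norm_num)]
      norm_num
    rw [he, lintegral_add_right _ measurable_const, lintegral_one]
  have h2 : ν univ ≤ ν (Icc 0 n) + (∫⁻ ω, ENNReal.ofReal ω ∂ν) := by
    have hsub : (univ : Set ℝ) ⊆ Iio 0 ∪ (Icc 0 n ∪ Ioi n) := by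
      intro ω _
      rcases lt_or_ge ω 0 with h | h
      · exact Or.inl h
      · rcases le_or_gt ω n with h' | h'
        · exact Or.inr (Or.inl ⟨h, h'⟩)
        · exact Or.inr (Or.inr h')
    have htail : ν (Ioi n) ≤ ∫⁻ ω, ENNReal.ofReal ω ∂ν := by
      rw [← lintegral_indicator_one measurableSet_Ioi]
      apply lintegral_mono
      intro ω
      rw [indicator_apply]
      split
      · rename_i h
        calc (1:ℝ≥0∞) = ENNReal.ofReal 1 := by norm_num
          _ ≤ ENNReal.ofReal ω := ENNReal.ofReal_le_ofReal (le_trans hn (le_of_lt h))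
      · exact zero_le
    calc ν univ ≤ ν (Iio 0 ∪ (Icc 0 n ∪ Ioi n)) := measure_mono hsub
      _ ≤ ν (Iio 0) + (ν (Icc 0 n) + ν (Ioi n)) :=
          le_trans (measure_union_le _ _) (by gcongr; exact measure_union_le _ _)
      _ = ν (Icc 0 n) + ν (Ioi n) := by rw [hsupp, zero_add]
      _ ≤ ν (Icc 0 n) + (∫⁻ ω, ENNReal.ofReal ω ∂ν) := by gcongr
  calc Bq ν = (∫⁻ ω, ENNReal.ofReal ω ∂ν) + ν univ := h1
    _ ≤ E + (M + E) := by
        apply add_le_add hE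
        exact le_trans h2 (add_le_add hM hE)
    _ = M + E + E := by ring

/-- test functions given by indicator of `[0,n]` of a bounded function. -/
lemma testFun_indicator {n : ℝ} (g : ℝ → ℝ) (hg : Measurable g) (C : ℝ)
    (hC : ∀ ω ∈ Icc (0:ℝ) n, |g ω| ≤ C) : TestFun ((Icc (0:ℝ) n).indicator g) := by
  refine ⟨hg.indicator measurableSet_Icc, ⟨max C 0, fun ω => ?_⟩, ⟨|n| + 1, fun ω hω => ?_⟩⟩
  · by_cases h : ω ∈ Icc (0:ℝ) n
    · rw [indicator_of_mem h]; exact le_trans (hC ω h) (le_max_left _ _)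
    · rw [indicator_of_notMem h, abs_zero]; exact le_max_right _ _
  · apply indicator_of_notMem
    intro hmem
    obtain ⟨h0, h1⟩ := hmem
    rw [abs_of_nonneg h0] at hω
    have : n ≤ |n| := le_abs_self n
    linarith

lemma testFun_chiT (n : ℝ) : TestFun (chiT n) :=
  testFun_indicator _ measurable_const 1 (fun ω _ => by rw [abs_one])

lemma testFun_fcut {n : ℝ} (hn : 0 ≤ n) : TestFun (fcut n) := by
  apply testFun_indicator (fun ω => ω) measurable_id n
  intro ω hω
  rw [abs_of_nonneg hω.1]
  exact hω.2

lemma testFun_vcut {n : ℝ} (hn : 0 ≤ n) : TestFun (vcut n) := by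
  apply testFun_indicator (fun ω => phi ω ^ 2) (phi_measurable.pow_const 2) ((n+1)^2)
  intro ω hω
  have h1 : 0 ≤ phi ω := phi_nonneg hω.1
  have h2 : phi ω ≤ n + 1 := by unfold phi; linarith [hω.2]
  rw [abs_of_nonneg (by positivity)]
  nlinarith


/-- bounded measurable functions are integrable against finite measures. -/
lemma testFun_integrable {f : ℝ → ℝ} (hf : TestFun f) (ν : Measure ℝ) [IsFiniteMeasure ν] :
    Integrable f ν := by
  obtain ⟨hmeas, ⟨C, hC⟩, -⟩ := hf
  exact (integrable_const C).mono' hmeas.aestronglyMeasurable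
    (Filter.Eventually.of_forall (fun ω => by rw [Real.norm_eq_abs]; exact hC ω))

/-- splitting of `Aq` into a truncated part and a tail. -/
lemma Aq_split (ν : Measure ℝ) (hsupp : ν (Iio 0) = 0) {n : ℝ} (hn : 0 ≤ n) :
    Aq ν = (∫⁻ ω, ENNReal.ofReal (vcut n ω) ∂ν) + Wq n ν := by
  have h1 : Wq n ν = ∫⁻ ω, (Ioi n).indicator (fun ω => ENNReal.ofReal (phi ω ^ 2)) ω ∂ν := by
    unfold Wq; rw [lintegral_indicator measurableSet_Ioi]
  rw [h1, ← lintegral_add_left]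
  · apply lintegral_congr_ae
    filter_upwards [ae_nonneg ν hsupp] with ω hω
    rw [indicator_apply]
    unfold vcut
    rw [indicator_apply]
    by_cases h : ω ≤ n
    · rw [if_pos (show ω ∈ Icc (0:ℝ) n from ⟨hω, h⟩), if_neg (show ω ∉ Ioi n from not_lt.mpr h)]
      rw [add_zero]
    · rw [if_neg (show ω ∉ Icc (0:ℝ) n from fun hm => h hm.2),
        if_pos (show ω ∈ Ioi n from not_le.mp h)]
      rw [ENNReal.ofReal_zero, zero_add]
  · exact ENNReal.measurable_ofReal.comp
      ((phi_measurable.pow_const 2).indicator measurableSet_Icc)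

/-- `vcut` increases to `φ²` on `[0,∞)`. -/
lemma sup_vcut (ν : Measure ℝ) (hsupp : ν (Iio 0) = 0) :
    (⨆ m : ℕ, ∫⁻ ω, ENNReal.ofReal (vcut m ω) ∂ν) = Aq ν := by
  have hmono : Monotone (fun m : ℕ => fun ω => ENNReal.ofReal (vcut m ω)) := by
    intro m m' hm
    intro ω
    apply ENNReal.ofReal_le_ofReal
    unfold vcut
    rw [indicator_apply, indicator_apply]
    by_cases h : ω ∈ Icc (0:ℝ) m
    · rw [if_pos h, if_pos (show ω ∈ Icc (0:ℝ) m' from ⟨h.1, le_trans h.2 (by exact_mod_cast hm)⟩)]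
    · rw [if_neg h]
      split
      · positivity
      · exact le_refl 0
  unfold vcut
  rw [← lintegral_iSup (fun m => (((phi_measurable.pow_const 2).indicator
      measurableSet_Icc).ennreal_ofReal)) (fun m m' hm => hmono hm)]
  apply lintegral_congr_ae
  filter_upwards [ae_nonneg ν hsupp] with ω hω
  apply le_antisymm
  · apply iSup_le
    intro m
    apply ENNReal.ofReal_le_ofReal
    rw [indicator_apply]
    split
    · exact le_refl _
    · positivity
  · obtain ⟨m, hm⟩ := exists_nat_ge ω
    apply le_trans _ (le_iSup _ m)
    rw [indicator_of_mem (show ω ∈ Icc (0:ℝ) m from ⟨hω, hm⟩)]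

/-- `fcut` increases to `ω`. -/
lemma sup_fcut (ν : Measure ℝ) :
    (⨆ m : ℕ, ∫⁻ ω, ENNReal.ofReal (fcut (2 * m) ω) ∂ν) = ∫⁻ ω, ENNReal.ofReal ω ∂ν := by
  have hmono : ∀ (m m' : ℕ), m ≤ m' → ∀ ω,
      ENNReal.ofReal (fcut (2 * m) ω) ≤ ENNReal.ofReal (fcut (2 * m') ω) := by
    intro m m' hm ω
    apply ENNReal.ofReal_le_ofReal
    unfold fcut
    rw [indicator_apply, indicator_apply]
    by_cases h : ω ∈ Icc (0:ℝ) (2*m)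
    · have hc : (m:ℝ) ≤ (m':ℝ) := Nat.cast_le.mpr hm
      rw [if_pos h, if_pos (show ω ∈ Icc (0:ℝ) (2*m') from ⟨h.1, by linarith [h.2]⟩)]
    · rw [if_neg h]
      split
      · rename_i hmem; exact hmem.1
      · exact le_refl 0
  unfold fcut
  rw [← lintegral_iSup (fun m => ((measurable_id'.indicator
      measurableSet_Icc).ennreal_ofReal)) (fun m m' hm ω => hmono m m' hm ω)]
  apply lintegral_congr
  intro ω
  apply le_antisymm
  · apply iSup_le
    intro m
    rw [indicator_apply]
    split
    · exact le_refl _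
    · rw [ENNReal.ofReal_zero]; exact zero_le
  · rcases le_or_gt 0 ω with h0 | h0
    · obtain ⟨m, hm⟩ := exists_nat_ge ω
      apply le_trans _ (le_iSup _ m)
      apply ENNReal.ofReal_le_ofReal
      rw [indicator_of_mem (show ω ∈ Icc (0:ℝ) (2*(m:ℕ):ℝ) from ⟨h0, by push_cast; linarith⟩)]
    · rw [ENNReal.ofReal_of_nonpos h0.le]
      exact zero_le


lemma fcut_ofReal_mono {m m' : ℕ} (hm : m ≤ m') (ω : ℝ) :
    ENNReal.ofReal (fcut (2*(m:ℝ)) ω) ≤ ENNReal.ofReal (fcut (2*(m':ℝ)) ω) := by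
  apply ENNReal.ofReal_le_ofReal
  unfold fcut
  rw [indicator_apply, indicator_apply]
  by_cases h : ω ∈ Icc (0:ℝ) (2*(m:ℝ))
  · have hc : (m:ℝ) ≤ (m':ℝ) := Nat.cast_le.mpr hm
    rw [if_pos h, if_pos (show ω ∈ Icc (0:ℝ) (2*(m':ℝ)) from ⟨h.1, by linarith [h.2]⟩)]
  · rw [if_neg h]
    split
    · rename_i hmem; exact hmem.1
    · exact le_refl 0

/-- continuity of the primitive `u ↦ ∫_{(0,u]} q`. -/
lemma prim_contOn (q : ℝ → ℝ) {b : ℝ} (hb : IntegrableOn q (Ioc (0:ℝ) b) volume) :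
    ContinuousOn (fun u => ∫ s in Ioc (0:ℝ) u, q s) (Icc (0:ℝ) b) := by
  apply intervalIntegral.continuousOn_primitive
  rwa [integrableOn_Icc_iff_integrableOn_Ioc]

/-- the primitive `u ↦ ∫_{(0,u]} q` is a.e.-measurable on `(0,t]`, with Lean's
junk-value conventions for non-integrable integrands. -/
lemma prim_aemeasurable (q : ℝ → ℝ) (t : ℝ) :
    AEMeasurable (fun u => ∫ s in Ioc (0:ℝ) u, q s) (volume.restrict (Ioc (0:ℝ) t)) := by
  rcases lt_or_ge t 0 with ht | ht
  · rw [Ioc_eq_empty (by linarith), Measure.restrict_empty]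
    exact aemeasurable_zero_measure
  set F := fun u => ∫ s in Ioc (0:ℝ) u, q s with hF
  by_cases hT : IntegrableOn q (Ioc 0 t) volume
  · exact ((prim_contOn q hT).aemeasurable measurableSet_Icc).mono_measure
      (Measure.restrict_mono Ioc_subset_Icc_self le_rfl)
  · set U : Set ℝ := {u | 0 ≤ u ∧ u ≤ t ∧ IntegrableOn q (Ioc 0 u) volume} with hU
    have hU0 : (0:ℝ) ∈ U := ⟨le_rfl, ht, by simp [IntegrableOn]⟩
    have hUbdd : BddAbove U := ⟨t, fun u hu => hu.2.1⟩
    set c := sSup U with hc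
    have hc0 : 0 ≤ c := le_csSup hUbdd hU0
    have hct : c ≤ t := csSup_le ⟨0, hU0⟩ fun u hu => hu.2.1
    have hdc : ∀ u, 0 ≤ u → u < c → IntegrableOn q (Ioc 0 u) volume := by
      intro u hu0 huc
      obtain ⟨v, hvU, huv⟩ := exists_lt_of_lt_csSup ⟨0, hU0⟩ huc
      exact hvU.2.2.mono_set (Ioc_subset_Ioc le_rfl huv.le)
    have hzero : ∀ u, c < u → u ≤ t → F u = 0 := by
      intro u hcu hut
      have hnot : ¬ IntegrableOn q (Ioc 0 u) volume := by
        intro h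
        exact absurd (le_csSup hUbdd ⟨le_trans hc0 hcu.le, hut, h⟩) (not_le.mpr hcu)
      exact integral_undef hnot
    -- split (0, t] into (0, c) and [c, t]
    have hcover : Ioc (0:ℝ) t ⊆ Ioo 0 c ∪ Icc c t := by
      intro u hu
      rcases lt_or_ge u c with h | h
      · exact Or.inl ⟨hu.1, h⟩
      · exact Or.inr ⟨h, hu.2⟩
    have hmono : volume.restrict (Ioc (0:ℝ) t) ≤
        volume.restrict (Ioo 0 c) + volume.restrict (Icc c t) := by
      apply le_trans (Measure.restrict_mono hcover le_rfl)
      exact Measure.restrict_union_le _ _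
    apply AEMeasurable.mono_measure _ hmono
    rw [aemeasurable_add_measure_iff]
    constructor
    · -- on (0, c): exhaust by (0, v k)
      rcases eq_or_lt_of_le hc0 with hc0' | hc0'
      · rw [show Ioo (0:ℝ) c = ∅ by rw [← hc0']; exact Ioo_self 0, Measure.restrict_empty]
        exact aemeasurable_zero_measure
      · have hex : ∀ k : ℕ, ∃ v, v ∈ U ∧ c - c/(k+2) < v := by
          intro k
          apply exists_lt_of_lt_csSup ⟨0, hU0⟩
          have : 0 < c/(k+2) := by positivity
          linarith
        choose v hvU hvlt using hex
        have hcov2 : Ioo (0:ℝ) c ⊆ ⋃ k : ℕ, Ioo 0 (v k) := by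
          intro u hu
          have : ∃ k : ℕ, c / (k+2) < c - u := by
            obtain ⟨k, hk⟩ := exists_nat_gt (c / (c - u))
            refine ⟨k, ?_⟩
            have h1 : (0:ℝ) < c - u := by linarith [hu.2]
            have h2 : c / (c - u) < (k:ℝ) + 2 := by linarith
            rw [div_lt_iff₀ h1] at h2
            rw [div_lt_iff₀ (by positivity : (0:ℝ) < (k:ℝ)+2)]
            linarith
          obtain ⟨k, hk⟩ := this
          exact mem_iUnion.mpr ⟨k, hu.1, by linarith [hvlt k]⟩
        apply AEMeasurable.mono_measure _
          (le_trans (Measure.restrict_mono hcov2 le_rfl) Measure.restrict_iUnion_le)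
        rw [aemeasurable_sum_measure_iff]
        intro k
        exact ((prim_contOn q (hvU k).2.2).aemeasurable measurableSet_Icc).mono_measure
          (Measure.restrict_mono (show Ioo (0:ℝ) (v k) ⊆ Icc (0:ℝ) (v k) from
            fun u hu => ⟨hu.1.le, hu.2.le⟩) le_rfl)
    · -- on [c, t]: F vanishes a.e.
      have hae : ∀ᵐ u ∂(volume.restrict (Icc c t)), F u = 0 := by
        have hsub : {u | ¬ F u = 0} ∩ Icc c t ⊆ {c} := by
          intro u hu
          rcases eq_or_lt_of_le hu.2.1 with h | h
          · exact h ▸ rfl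
          · exact absurd (hzero u h hu.2.2) hu.1
        rw [ae_restrict_iff' measurableSet_Icc]
        rw [ae_iff]
        apply measure_mono_null (t := {c})
        · intro u hu
          simp only [mem_setOf_eq, not_forall] at hu
          exact hsub ⟨hu.2, hu.1⟩
        · exact measure_singleton c
      have hae' : F =ᵐ[volume.restrict (Icc c t)] (fun _ => (0:ℝ)) := hae
      exact (aemeasurable_congr hae').mpr aemeasurable_const


lemma integral_chiT (n : ℝ) (ν : Measure ℝ) : ∫ ω, chiT n ω ∂ν = (ν (Icc 0 n)).toReal := by
  unfold chiT
  rw [integral_indicator_const (1:ℝ) measurableSet_Icc]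
  simp [Measure.real_def]

section Main
variable {K : ℝ → ℝ → ℝ → ℝ} {μ₀ : Measure ℝ} {T : ℝ} {μ : ℝ → Measure ℝ}

/-- Uniform bound on `⟨φ, μ_s⟩` for a local solution with time-integrable `⟨φ²,μ_s⟩`. -/
lemma bootstrap_B (hKnn : ∀ x y z : ℝ, 0 ≤ x → 0 ≤ y → 0 ≤ z → 0 ≤ K x y z)
    (hKsub : IsSubmultiplicative K) [IsFiniteMeasure μ₀]
    (hloc : IsLocalSolution K μ₀ T μ)
    {t : ℝ} (ht0 : 0 ≤ t) (htT : t < T)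
    (hΘ : ∫⁻ s in Ioc (0:ℝ) t, Aq (μ s) < ⊤)
    (hE0 : (∫⁻ ω, ENNReal.ofReal ω ∂μ₀) ≠ ⊤) :
    ∀ s, 0 < s → s ≤ t → Bq (μ s) ≤
      ENNReal.ofReal ((μ₀ univ).toReal + 1) + (∫⁻ ω, ENNReal.ofReal ω ∂μ₀)
        + (∫⁻ ω, ENNReal.ofReal ω ∂μ₀) := by
  set E0 : ℝ≥0∞ := ∫⁻ ω, ENNReal.ofReal ω ∂μ₀ with hE0def
  set m₀ : ℝ := (μ₀ univ).toReal with hm₀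
  have hm₀0 : 0 ≤ m₀ := ENNReal.toReal_nonneg
  set CB : ℝ≥0∞ := ENNReal.ofReal (m₀ + 1) + E0 + E0 with hCB
  have hCBne : CB ≠ ⊤ := by
    rw [hCB]
    exact ENNReal.add_ne_top.mpr ⟨ENNReal.add_ne_top.mpr ⟨ENNReal.ofReal_ne_top, hE0⟩, hE0⟩
  set Θ : ℝ≥0∞ := ∫⁻ s in Ioc (0:ℝ) t, Aq (μ s) with hΘdef
  -- choose N
  have hNex : ∃ N : ℕ, 1 ≤ (N:ℝ) ∧
      ENNReal.ofReal (10/(N:ℝ)) * ((CB * CB) * Θ) < ENNReal.ofReal (1/2) := by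
    have h10 : Filter.Tendsto (fun n : ℕ => (10:ℝ)/(n:ℝ)) Filter.atTop (nhds 0) :=
      tendsto_const_div_atTop_nhds_zero_nat 10
    have h1 : Filter.Tendsto (fun n : ℕ => ENNReal.ofReal (10/(n:ℝ))) Filter.atTop (nhds 0) := by
      have := (ENNReal.continuous_ofReal.tendsto 0).comp h10
      simpa [Function.comp_def] using this
    have hfin : (CB * CB) * Θ ≠ ⊤ :=
      ENNReal.mul_ne_top (ENNReal.mul_ne_top hCBne hCBne) hΘ.ne
    have h2 := ENNReal.Tendsto.mul_const h1 (Or.inr hfin)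
    rw [zero_mul] at h2
    have h3 := h2.eventually_lt_const (show (0:ℝ≥0∞) < ENNReal.ofReal (1/2) by
      rw [ENNReal.ofReal_pos]; norm_num)
    obtain ⟨N, hN⟩ := (h3.and (Filter.eventually_ge_atTop 1)).exists
    exact ⟨N, by exact_mod_cast hN.2, hN.1⟩
  obtain ⟨N, hN1, hNsmall⟩ := hNex
  set qm : ℝ → ℝ := fun s => Qpair K (μ s) (chiT N) with hqm
  set mn : ℝ → ℝ := fun u => ∫ ω, chiT N ω ∂(μ u) with hmn
  have heqn : ∀ u, 0 ≤ u → u ≤ t →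
      mn u = (∫ ω, chiT N ω ∂μ₀) + ∫ s in Ioc (0:ℝ) u, qm s :=
    fun u h0 h1 => hloc.eqn (chiT N) (testFun_chiT N) u h0 (lt_of_le_of_lt h1 htT)
  have hmn0 : (∫ ω, chiT N ω ∂μ₀) ≤ m₀ := by
    rw [integral_chiT]
    exact ENNReal.toReal_mono (measure_ne_top μ₀ _) (measure_mono (subset_univ _))
  -- the B bound at a single time, given truncated-mass control
  have hBs : ∀ s, 0 < s → s ≤ t → mn s ≤ m₀ + 1 → Bq (μ s) ≤ CB := by
    intro s hs0 hst hms
    haveI hfin : IsFiniteMeasure (μ s) := hloc.finite s hs0.le (lt_of_le_of_lt hst htT)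
    have hsupps : μ s (Iio 0) = 0 := hloc.supp s hs0.le (lt_of_le_of_lt hst htT)
    have hEs : ∫⁻ ω, ENNReal.ofReal ω ∂(μ s) ≤ E0 :=
      hloc.energy s hs0.le (lt_of_le_of_lt hst htT)
    have hmass : μ s (Icc 0 (N:ℝ)) ≤ ENNReal.ofReal (m₀ + 1) := by
      have : mn s = (μ s (Icc 0 (N:ℝ))).toReal := integral_chiT (N:ℝ) (μ s)
      rw [← ENNReal.ofReal_toReal (measure_ne_top (μ s) (Icc 0 (N:ℝ))), ← this]
      exact ENNReal.ofReal_le_ofReal hms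
    exact Bq_bound (μ s) hsupps hN1 hEs hmass
  -- the key estimate
  have hest : ∀ u, 0 ≤ u → u ≤ t → (∀ s, 0 < s → s < u → mn s ≤ m₀ + 1) →
      mn u ≤ m₀ + 1/2 := by
    intro u h0 h1 hhyp
    have heq := heqn u h0 h1
    have hnorm : ‖∫ s in Ioc (0:ℝ) u, qm s‖ ≤
        (∫⁻ s in Ioc (0:ℝ) u, ENNReal.ofReal ‖qm s‖).toReal :=
      norm_integral_le_lintegral_norm qm
    have hae1 : ∀ᵐ s ∂(volume.restrict (Ioc (0:ℝ) u)), s ≠ u := by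
      rw [ae_iff]
      apply measure_mono_null (t := {u})
      · intro s hs; simpa using hs
      · rw [Measure.restrict_apply (measurableSet_singleton u)]
        exact le_antisymm (le_trans (measure_mono inter_subset_left)
          (le_of_eq (measure_singleton u))) (zero_le)
    have hlb : ∫⁻ s in Ioc (0:ℝ) u, ENNReal.ofReal ‖qm s‖ ≤
        (ENNReal.ofReal (10/(N:ℝ)) * (CB * CB)) * Θ := by
      have step1 : ∫⁻ s in Ioc (0:ℝ) u, ENNReal.ofReal ‖qm s‖ ≤
          ∫⁻ s in Ioc (0:ℝ) u, (ENNReal.ofReal (10/(N:ℝ)) * (CB * CB)) * Aq (μ s) := by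
        apply lintegral_mono_ae
        filter_upwards [ae_restrict_mem measurableSet_Ioc, hae1] with s hs hsne
        have hs0 : 0 < s := hs.1
        have hsu : s < u := lt_of_le_of_ne hs.2 hsne
        have hst : s ≤ t := le_trans hs.2 h1
        haveI hfin : IsFiniteMeasure (μ s) := hloc.finite s hs0.le (lt_of_le_of_lt hst htT)
        have hsupps : μ s (Iio 0) = 0 := hloc.supp s hs0.le (lt_of_le_of_lt hst htT)
        have hBq : Bq (μ s) ≤ CB := hBs s hs0 hst (hhyp s hs0 hsu)
        have hq := qmass (K := K) hKnn hKsub (μ s) hsupps hN1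
        rw [Real.norm_eq_abs]
        calc ENNReal.ofReal |qm s|
            ≤ ENNReal.ofReal (10/(N:ℝ)) * (Aq (μ s) * (Bq (μ s) * Bq (μ s))) := hq
          _ ≤ ENNReal.ofReal (10/(N:ℝ)) * (Aq (μ s) * (CB * CB)) := by gcongr
          _ = (ENNReal.ofReal (10/(N:ℝ)) * (CB * CB)) * Aq (μ s) := by ring
      apply le_trans step1
      rw [lintegral_const_mul' _ _ (ENNReal.mul_ne_top ENNReal.ofReal_ne_top
        (ENNReal.mul_ne_top hCBne hCBne))]
      gcongr
      exact lintegral_mono_set (Ioc_subset_Ioc le_rfl h1)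
    have habs : |∫ s in Ioc (0:ℝ) u, qm s| ≤ 1/2 := by
      rw [← Real.norm_eq_abs]
      apply le_trans hnorm
      have h2 : (∫⁻ s in Ioc (0:ℝ) u, ENNReal.ofReal ‖qm s‖) ≤ ENNReal.ofReal (1/2) := by
        apply le_trans hlb
        rw [mul_assoc]
        exact hNsmall.le
      calc (∫⁻ s in Ioc (0:ℝ) u, ENNReal.ofReal ‖qm s‖).toReal
          ≤ (ENNReal.ofReal (1/2)).toReal := ENNReal.toReal_mono ENNReal.ofReal_ne_top h2
        _ = 1/2 := by rw [ENNReal.toReal_ofReal]; norm_num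
    rw [heq]
    have := neg_abs_le (∫ s in Ioc (0:ℝ) u, qm s)
    have := le_abs_self (∫ s in Ioc (0:ℝ) u, qm s)
    linarith
  -- the supremum argument
  have hall : ∀ u, 0 ≤ u → u ≤ t → mn u ≤ m₀ + 1 := by
    set S : Set ℝ := {u | 0 ≤ u ∧ u ≤ t ∧ ∀ u', 0 ≤ u' → u' ≤ u → mn u' ≤ m₀ + 1} with hS
    have h0S : (0:ℝ) ∈ S := by
      refine ⟨le_rfl, ht0, fun u' h0' h1' => ?_⟩
      have : u' = 0 := le_antisymm h1' h0'
      subst this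
      have := hest 0 le_rfl ht0 (fun s hs0 hs1 => absurd (lt_trans hs0 hs1) (lt_irrefl 0))
      linarith
    have hSbdd : BddAbove S := ⟨t, fun u hu => hu.2.1⟩
    set c := sSup S with hc
    have hc0 : 0 ≤ c := le_csSup hSbdd h0S
    have hct : c ≤ t := csSup_le ⟨0, h0S⟩ fun u hu => hu.2.1
    have hlt : ∀ u', 0 ≤ u' → u' < c → mn u' ≤ m₀ + 1 := by
      intro u' h0' h1'
      obtain ⟨v, hvS, hv⟩ := exists_lt_of_lt_csSup ⟨0, h0S⟩ h1'
      exact hvS.2.2 u' h0' hv.le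
    have hc_half : ∀ u', 0 ≤ u' → u' ≤ c → mn u' ≤ m₀ + 1/2 := by
      intro u' h0' h1'
      exact hest u' h0' (le_trans h1' hct)
        (fun s hs0 hsu => hlt s hs0.le (lt_of_lt_of_le hsu h1'))
    have hceq : c = t := by
      by_contra hne
      have hclt : c < t := lt_of_le_of_ne hct hne
      by_cases hint : ∃ v, c < v ∧ v ≤ t ∧ IntegrableOn qm (Ioc 0 v) volume
      · obtain ⟨v, hcv, hvt, hintv⟩ := hint
        have hv0 : 0 ≤ v := le_trans hc0 hcv.le
        have hcontmn : ContinuousOn mn (Icc 0 v) := by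
          apply ((continuousOn_const (c := ∫ ω, chiT (N:ℝ) ω ∂μ₀)).add
            (prim_contOn qm hintv)).congr
          intro u hu
          exact heqn u hu.1 (le_trans hu.2 hvt)
        have hcw : ContinuousWithinAt mn (Icc 0 v) c := hcontmn c ⟨hc0, hcv.le⟩
        have hev : ∀ᶠ x in nhdsWithin c (Icc 0 v), mn x ∈ Iio (m₀ + 1) := by
          apply hcw.eventually
          apply isOpen_Iio.eventually_mem
          have := hc_half c hc0 le_rfl
          simp only [mem_Iio]
          linarith
        obtain ⟨ε, hε, hsub⟩ := Metric.mem_nhdsWithin_iff.mp hev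
        set d := min (c + ε/2) (min v t) with hd
        have hcd : c < d := lt_min (by linarith) (lt_min hcv hclt)
        have hdS : d ∈ S := by
          refine ⟨le_trans hc0 hcd.le, le_trans (min_le_right _ _) (min_le_right _ _), ?_⟩
          intro u' h0' h1'
          rcases le_or_gt u' c with h | h
          · linarith [hc_half u' h0' h]
          · have hu'le : u' ≤ v := le_trans h1' (le_trans (min_le_right _ _) (min_le_left _ _))
            have hmem : u' ∈ Metric.ball c ε ∩ Icc 0 v := by
              constructor
              · rw [Metric.mem_ball, Real.dist_eq, abs_of_nonneg (by linarith)]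
                have hle : u' ≤ c + ε/2 := le_trans h1' (min_le_left _ _)
                linarith
              · exact ⟨h0', hu'le⟩
            have hres := hsub hmem
            simp only [mem_setOf_eq, mem_Iio] at hres
            linarith
        have := le_csSup hSbdd hdS
        linarith
      · push_neg at hint
        have htS : t ∈ S := by
          refine ⟨ht0, le_rfl, fun u' h0' h1' => ?_⟩
          rcases le_or_gt u' c with h | h
          · linarith [hc_half u' h0' h]
          · have hbad : ¬ IntegrableOn qm (Ioc 0 u') volume := hint u' h h1'
            have := heqn u' h0' h1'
            rw [integral_undef hbad] at this
            rw [this, add_zero]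
            linarith [hmn0]
        have := le_csSup hSbdd htS
        linarith
    intro u h0 h1
    have := hc_half u h0 (by rw [hceq]; exact h1)
    linarith
  intro s hs0 hst
  exact hBs s hs0 hst (hall s hs0.le hst)


/-- the tail second moments vanish, integrated in time. -/
lemma tendsto_Wtail (hloc : IsLocalSolution K μ₀ T μ) [IsFiniteMeasure μ₀]
    {t : ℝ} (ht0 : 0 ≤ t) (htT : t < T)
    (hΘ : ∫⁻ s in Ioc (0:ℝ) t, Aq (μ s) < ⊤) :
    Filter.Tendsto (fun m : ℕ => ∫⁻ s in Ioc (0:ℝ) t, Wq m (μ s)) Filter.atTop (nhds 0) := by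
  set Θ : ℝ≥0∞ := ∫⁻ s in Ioc (0:ℝ) t, Aq (μ s) with hΘdef
  set H : ℕ → ℝ → ℝ≥0∞ := fun m s => ∫⁻ ω, ENNReal.ofReal (vcut m ω) ∂(μ s) with hH
  have hsT : ∀ s, s ∈ Ioc (0:ℝ) t → (0 ≤ s ∧ s < T) :=
    fun s hs => ⟨hs.1.le, lt_of_le_of_lt hs.2 htT⟩
  -- a.e.-measurability of H m
  have hHmeas : ∀ m : ℕ, AEMeasurable (H m) (volume.restrict (Ioc (0:ℝ) t)) := by
    intro m
    have hV : AEMeasurable (fun u => ∫ ω, vcut m ω ∂(μ u)) (volume.restrict (Ioc (0:ℝ) t)) := by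
      have hprim := prim_aemeasurable (fun s => Qpair K (μ s) (vcut m)) t
      apply AEMeasurable.congr (aemeasurable_const.add hprim)
      filter_upwards [ae_restrict_mem measurableSet_Ioc] with u hu
      exact (hloc.eqn (vcut m) (testFun_vcut (by positivity)) u (hsT u hu).1 (hsT u hu).2).symm
    apply AEMeasurable.congr (hV.ennreal_ofReal)
    filter_upwards [ae_restrict_mem measurableSet_Ioc] with s hs
    haveI := hloc.finite s (hsT s hs).1 (hsT s hs).2
    exact ofReal_integral_eq_lintegral_ofReal
      (testFun_integrable (testFun_vcut (by positivity)) (μ s))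
      (Filter.Eventually.of_forall (fun ω => indicator_nonneg (fun x _ => by positivity) ω))
  have hmono : ∀ s, Monotone (fun m : ℕ => H m s) := by
    intro s m m' hm
    apply lintegral_mono
    intro ω
    apply ENNReal.ofReal_le_ofReal
    unfold vcut
    rw [indicator_apply, indicator_apply]
    by_cases h : ω ∈ Icc (0:ℝ) m
    · have hc : (m:ℝ) ≤ (m':ℝ) := Nat.cast_le.mpr hm
      rw [if_pos h, if_pos (show ω ∈ Icc (0:ℝ) m' from ⟨h.1, by linarith [h.2]⟩)]
    · rw [if_neg h]
      split
      · positivity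
      · exact le_refl 0
  set θH : ℕ → ℝ≥0∞ := fun m => ∫⁻ s in Ioc (0:ℝ) t, H m s with hθH
  have hsplit : ∀ m : ℕ, θH m + (∫⁻ s in Ioc (0:ℝ) t, Wq m (μ s)) = Θ := by
    intro m
    rw [hθH, ← lintegral_add_left' (hHmeas m)]
    apply lintegral_congr_ae
    filter_upwards [ae_restrict_mem measurableSet_Ioc] with s hs
    exact (Aq_split (μ s) (hloc.supp s (hsT s hs).1 (hsT s hs).2) (by positivity)).symm
  have hθHle : ∀ m, θH m ≤ Θ := fun m => le_trans le_self_add (le_of_eq (hsplit m))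
  have hθHsup : (⨆ m, θH m) = Θ := by
    rw [hθH, ← lintegral_iSup' hHmeas (Filter.Eventually.of_forall hmono)]
    apply lintegral_congr_ae
    filter_upwards [ae_restrict_mem measurableSet_Ioc] with s hs
    exact sup_vcut (μ s) (hloc.supp s (hsT s hs).1 (hsT s hs).2)
  have hθHlim : Filter.Tendsto θH Filter.atTop (nhds Θ) := by
    rw [← hθHsup]
    apply tendsto_atTop_iSup
    intro m m' hm
    exact lintegral_mono_ae (Filter.Eventually.of_forall (fun s => hmono s hm))
  have hWeq : ∀ m : ℕ, (∫⁻ s in Ioc (0:ℝ) t, Wq m (μ s)) = Θ - θH m := by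
    intro m
    rw [← hsplit m]
    rw [ENNReal.add_sub_cancel_left (lt_of_le_of_lt (hθHle m) hΘ).ne]
  have : Filter.Tendsto (fun m : ℕ => Θ - θH m) Filter.atTop (nhds (Θ - Θ)) :=
    ENNReal.Tendsto.sub tendsto_const_nhds hθHlim (Or.inl hΘ.ne)
  rw [tsub_self] at this
  apply this.congr
  intro m
  exact (hWeq m).symm

end Main
end WaveAux

open WaveAux ENNReal in
/-- Any strong local solution starting from `μ₀` (finite, nonnegative,
`⟨φ, μ₀⟩ < ∞`) is conservative: the total energy `∫ ω μ_t(dω)` is finite and constant. -/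
theorem strong_solution_is_conservative
    (K : ℝ → ℝ → ℝ → ℝ) (hK : IsModelKernel K) (hKsub : IsSubmultiplicative K)
    (μ₀ : Measure ℝ) [IsFiniteMeasure μ₀] (hsupp₀ : μ₀ (Set.Iio 0) = 0)
    (hphi₀ : ∫⁻ ω, ENNReal.ofReal (phi ω) ∂μ₀ < ⊤)
    (T : ℝ) (μ : ℝ → Measure ℝ) (hμ : IsStrongSolution K μ₀ T μ) :
    ∀ t, 0 ≤ t → t < T →
      (∫⁻ ω, ENNReal.ofReal ω ∂(μ t) < ⊤) ∧
      ∫ ω, ω ∂(μ t) = ∫ ω, ω ∂μ₀ := by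
  obtain ⟨hloc, hstrong⟩ := hμ
  intro t ht0 htT
  haveI : IsFiniteMeasure (μ t) := hloc.finite t ht0 htT
  have hE0lt : (∫⁻ ω, ENNReal.ofReal ω ∂μ₀) < ⊤ :=
    lt_of_le_of_lt (lintegral_mono fun ω => ENNReal.ofReal_le_ofReal le_phi) hphi₀
  have hLt : (∫⁻ ω, ENNReal.ofReal ω ∂(μ t)) < ⊤ :=
    lt_of_le_of_lt (hloc.energy t ht0 htT) hE0lt
  refine ⟨hLt, ?_⟩
  have hΘ : ∫⁻ s in Ioc (0:ℝ) t, Aq (μ s) < ⊤ := hstrong t ht0 htT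
  set E0 : ℝ≥0∞ := ∫⁻ ω, ENNReal.ofReal ω ∂μ₀ with hE0def
  set CB : ℝ≥0∞ := ENNReal.ofReal ((μ₀ univ).toReal + 1) + E0 + E0 with hCBdef
  have hCBne : CB ≠ ⊤ := by
    rw [hCBdef]
    exact ENNReal.add_ne_top.mpr ⟨ENNReal.add_ne_top.mpr ⟨ENNReal.ofReal_ne_top, hE0lt.ne⟩,
      hE0lt.ne⟩
  have hB := bootstrap_B hK.nonneg hKsub hloc ht0 htT hΘ hE0lt.ne
  have hWt := tendsto_Wtail (K := K) hloc ht0 htT hΘ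
  have h9ne : (9:ℝ≥0∞) * (CB * CB) ≠ ⊤ :=
    ENNReal.mul_ne_top (by norm_num) (ENNReal.mul_ne_top hCBne hCBne)
  -- the time-integral error bound
  have hqb : ∀ m : ℕ, 1 ≤ m →
      ‖∫ s in Ioc (0:ℝ) t, Qpair K (μ s) (fcut (2*(m:ℝ)))‖ ≤
        (9 * (CB * CB) * (∫⁻ s in Ioc (0:ℝ) t, Wq m (μ s))).toReal := by
    intro m hm
    apply le_trans (norm_integral_le_lintegral_norm _)
    have hlin : (∫⁻ s in Ioc (0:ℝ) t, ENNReal.ofReal ‖Qpair K (μ s) (fcut (2*(m:ℝ)))‖) ≤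
        9 * (CB * CB) * (∫⁻ s in Ioc (0:ℝ) t, Wq m (μ s)) := by
      rw [← lintegral_const_mul' _ _ h9ne]
      apply lintegral_mono_ae
      filter_upwards [ae_restrict_mem measurableSet_Ioc] with s hs
      have hs0 : 0 < s := hs.1
      have hsT' : s < T := lt_of_le_of_lt hs.2 htT
      haveI := hloc.finite s hs0.le hsT'
      have hsupps : μ s (Iio 0) = 0 := hloc.supp s hs0.le hsT'
      have hBq : Bq (μ s) ≤ CB := hB s hs0 hs.2
      have hq := qenergy (K := K) hK.nonneg hKsub (μ s) hsupps
        (show (0:ℝ) < (m:ℝ) by exact_mod_cast hm) (le_refl (2*(m:ℝ)))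
      rw [Real.norm_eq_abs]
      calc ENNReal.ofReal |Qpair K (μ s) (fcut (2*(m:ℝ)))|
          ≤ 9 * (Wq (m:ℝ) (μ s) * (Bq (μ s) * Bq (μ s))) := hq
        _ ≤ 9 * (Wq (m:ℝ) (μ s) * (CB * CB)) := by gcongr
        _ = 9 * (CB * CB) * Wq (m:ℝ) (μ s) := by ring
    have hfin : 9 * (CB * CB) * (∫⁻ s in Ioc (0:ℝ) t, Wq m (μ s)) ≠ ⊤ := by
      apply ENNReal.mul_ne_top h9ne
      apply ne_of_lt
      apply lt_of_le_of_lt _ hΘ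
      apply lintegral_mono_ae
      filter_upwards [ae_restrict_mem measurableSet_Ioc] with s _
      exact setLIntegral_le_lintegral _ _
    exact ENNReal.toReal_mono hfin hlin
  -- limits of the truncated energies
  have hfcut_nonneg : ∀ (n : ℝ) (ω : ℝ), 0 ≤ fcut n ω :=
    fun n ω => indicator_nonneg (fun x hx => hx.1) ω
  have hfcut_meas : ∀ n : ℝ, Measurable (fcut n) :=
    fun n => measurable_id'.indicator measurableSet_Icc
  have hconv : ∀ (ν : Measure ℝ), IsFiniteMeasure ν →
      (∫⁻ ω, ENNReal.ofReal ω ∂ν) ≠ ⊤ →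
      Filter.Tendsto (fun m : ℕ => ∫ ω, fcut (2*(m:ℝ)) ω ∂ν) Filter.atTop
        (nhds (∫⁻ ω, ENNReal.ofReal ω ∂ν).toReal) := by
    intro ν hfin hne
    have heq : ∀ m : ℕ, ∫ ω, fcut (2*(m:ℝ)) ω ∂ν =
        (∫⁻ ω, ENNReal.ofReal (fcut (2*(m:ℝ)) ω) ∂ν).toReal := by
      intro m
      rw [integral_eq_lintegral_of_nonneg_ae
        (Filter.Eventually.of_forall (hfcut_nonneg (2*(m:ℝ))))
        (hfcut_meas (2*(m:ℝ))).aestronglyMeasurable]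
    have hmono2 : Monotone (fun m : ℕ => ∫⁻ ω, ENNReal.ofReal (fcut (2*(m:ℝ)) ω) ∂ν) :=
      fun m m' hm => lintegral_mono (fun ω => fcut_ofReal_mono hm ω)
    have htd : Filter.Tendsto (fun m : ℕ => ∫⁻ ω, ENNReal.ofReal (fcut (2*(m:ℝ)) ω) ∂ν)
        Filter.atTop (nhds (∫⁻ ω, ENNReal.ofReal ω ∂ν)) := by
      rw [← sup_fcut ν]
      exact tendsto_atTop_iSup hmono2
    have := (ENNReal.tendsto_toReal hne).comp htd
    apply this.congr
    intro m
    exact (heq m).symm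
  have hlimT := hconv (μ t) inferInstance hLt.ne
  have hlim0 := hconv μ₀ inferInstance hE0lt.ne
  -- the error terms tend to zero
  have hbz : Filter.Tendsto
      (fun m : ℕ => (9 * (CB * CB) * (∫⁻ s in Ioc (0:ℝ) t, Wq m (μ s))).toReal)
      Filter.atTop (nhds 0) := by
    have h1 : Filter.Tendsto (fun m : ℕ => 9 * (CB * CB) * (∫⁻ s in Ioc (0:ℝ) t, Wq m (μ s)))
        Filter.atTop (nhds (9 * (CB * CB) * 0)) :=
      ENNReal.Tendsto.const_mul hWt (Or.inr h9ne)
    rw [mul_zero] at h1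
    exact (ENNReal.tendsto_toReal (by norm_num : (0:ℝ≥0∞) ≠ ⊤)).comp h1
  -- conclude via squeeze
  have hdiff : Filter.Tendsto
      (fun m : ℕ => (∫ ω, fcut (2*(m:ℝ)) ω ∂(μ t)) - (∫ ω, fcut (2*(m:ℝ)) ω ∂μ₀))
      Filter.atTop (nhds ((∫⁻ ω, ENNReal.ofReal ω ∂(μ t)).toReal -
        (∫⁻ ω, ENNReal.ofReal ω ∂μ₀).toReal)) := hlimT.sub hlim0
  have hdz : Filter.Tendsto
      (fun m : ℕ => (∫ ω, fcut (2*(m:ℝ)) ω ∂(μ t)) - (∫ ω, fcut (2*(m:ℝ)) ω ∂μ₀))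
      Filter.atTop (nhds 0) := by
    apply squeeze_zero_norm' _ hbz
    filter_upwards [Filter.eventually_ge_atTop 1] with m hm
    have heq2 := hloc.eqn (fcut (2*(m:ℝ))) (testFun_fcut (by positivity)) t ht0 htT
    have : (∫ ω, fcut (2*(m:ℝ)) ω ∂(μ t)) - (∫ ω, fcut (2*(m:ℝ)) ω ∂μ₀) =
        ∫ s in Ioc (0:ℝ) t, Qpair K (μ s) (fcut (2*(m:ℝ))) := by
      rw [heq2]; ring
    rw [this]
    exact hqb m hm
  have hkey : (∫⁻ ω, ENNReal.ofReal ω ∂(μ t)).toReal =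
      (∫⁻ ω, ENNReal.ofReal ω ∂μ₀).toReal := by
    have := tendsto_nhds_unique hdiff hdz
    linarith
  rw [integral_eq_lintegral_of_nonneg_ae (ae_nonneg (μ t) (hloc.supp t ht0 htT))
    aestronglyMeasurable_id,
    integral_eq_lintegral_of_nonneg_ae (ae_nonneg μ₀ hsupp₀) aestronglyMeasurable_id]
  exact hkey
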